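/- Let 0 < h̲ ≤ h̄, 0 < λ₂ ≤ λ_N, and η > 0 be real constants. Suppose α ≥ max{1, 2η/min{h̲, λ₂}, 6h̄²/(h̲λ₂)} and β ≥ max{1, 7α²λ_N²/λ₂²}. Then for all real numbers p, q, r with 0 ≤ r ≤ p and q ≥ 0: −α h̲ p² − β λ₂ r² + α λ_N r² + λ_N r q − (2λ₂/α²) q² + (2λ_N/α) r q + (2h̄/α) q p ≤ −2η(p²/2 + q²/α³). -/

import Mathlib

set_option maxHeartbeats 1000000


/-- The key algebraic inequality behind the Lyapunov decay estimate of the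
optimal signal generator: with `α ≥ max{1, 2η/min{h̲,λ₂}, 6h̄²/(h̲λ₂)}` and
`β ≥ max{1, 7α²λ_N²/λ₂²}`, for all `0 ≤ r ≤ p` and `q ≥ 0`,
`−αh̲p² − βλ₂r² + αλ_Nr² + λ_Nrq − (2λ₂/α²)q² + (2λ_N/α)rq + (2h̄/α)qp ≤ −2η(p²/2 + q²/α³)`. -/
theorem stmt_4 (hl hu lam2 lamN eta α β p q r : ℝ)
    (h1 : 0 < hl) (h2 : hl ≤ hu) (h3 : 0 < lam2) (h4 : lam2 ≤ lamN) (h5 : 0 < eta)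
    (hα : α ≥ max 1 (max (2 * eta / min hl lam2) (6 * hu ^ 2 / (hl * lam2))))
    (hβ : β ≥ max 1 (7 * α ^ 2 * lamN ^ 2 / lam2 ^ 2))
    (hr : 0 ≤ r) (hrp : r ≤ p) (hq : 0 ≤ q) :
    -α * hl * p ^ 2 - β * lam2 * r ^ 2 + α * lamN * r ^ 2 + lamN * r * q
      - (2 * lam2 / α ^ 2) * q ^ 2 + (2 * lamN / α) * r * q + (2 * hu / α) * q * p
      ≤ -2 * eta * (p ^ 2 / 2 + q ^ 2 / α ^ 3) := by
  have hα1 : (1:ℝ) ≤ α := le_trans (le_max_left _ _) hα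
  have hα0 : (0:ℝ) < α := lt_of_lt_of_le one_pos hα1
  have hmin : 0 < min hl lam2 := lt_min h1 h3
  have hA : 2 * eta / min hl lam2 ≤ α :=
    le_trans (le_trans (le_max_left _ _) (le_max_right _ _)) hα
  have hA' : 2 * eta ≤ α * min hl lam2 := by
    rw [div_le_iff₀ hmin] at hA; linarith
  have hAh : 2 * eta ≤ α * hl := le_trans hA' (by nlinarith [min_le_left hl lam2])
  have hAl : 2 * eta ≤ α * lam2 := le_trans hA' (by nlinarith [min_le_right hl lam2])
  have hB : 6 * hu ^ 2 / (hl * lam2) ≤ α :=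
    le_trans (le_trans (le_max_right _ _) (le_max_right _ _)) hα
  have hB' : 6 * hu ^ 2 ≤ α * (hl * lam2) := by
    rw [div_le_iff₀ (by positivity)] at hB; linarith
  have hC : 7 * α ^ 2 * lamN ^ 2 / lam2 ^ 2 ≤ β := le_trans (le_max_right _ _) hβ
  have hC' : 7 * α ^ 2 * lamN ^ 2 ≤ β * lam2 ^ 2 := by
    rw [div_le_iff₀ (by positivity)] at hC; linarith
  have hα3 : (0:ℝ) < α ^ 3 := by positivity
  have hp : 0 ≤ p := le_trans hr hrp
  have hlamN : 0 < lamN := lt_of_lt_of_le h3 h4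
  rw [show -α * hl * p ^ 2 - β * lam2 * r ^ 2 + α * lamN * r ^ 2 + lamN * r * q
      - (2 * lam2 / α ^ 2) * q ^ 2 + (2 * lamN / α) * r * q + (2 * hu / α) * q * p
      = ((-α * hl * p ^ 2 - β * lam2 * r ^ 2 + α * lamN * r ^ 2 + lamN * r * q) * α ^ 3
        - 2 * lam2 * α * q ^ 2 + 2 * lamN * α ^ 2 * r * q + 2 * hu * α ^ 2 * q * p) / α ^ 3
      from by field_simp]
  rw [show -2 * eta * (p ^ 2 / 2 + q ^ 2 / α ^ 3)
      = (-(eta * p ^ 2) * α ^ 3 - 2 * eta * q ^ 2) / α ^ 3 from by field_simp; ring]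
  rw [div_le_div_iff₀ hα3 hα3]
  -- work with everything scaled by 2*lam2
  have S1 : 2 * lam2 * (eta * p ^ 2 * α ^ 3) ≤ lam2 * (α ^ 4 * hl * p ^ 2) := by
    nlinarith [mul_nonneg (mul_nonneg h3.le (sq_nonneg p)) (pow_pos hα0 3).le]
  have S2 : 2 * lam2 * (2 * eta * q ^ 2) ≤ 2 * α * lam2 ^ 2 * q ^ 2 := by
    nlinarith [mul_nonneg (mul_nonneg h3.le (sq_nonneg q)) hα0.le]
  have S3 : 2 * lam2 * (lamN * r * q * α ^ 3 + 2 * lamN * α ^ 2 * r * q)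
      ≤ 6 * lam2 * lamN * α ^ 3 * r * q := by
    have h0 : 0 ≤ lam2 * lamN * (r * q) * α ^ 2 * (α - 1) :=
      mul_nonneg (mul_nonneg (mul_nonneg (mul_nonneg h3.le hlamN.le) (mul_nonneg hr hq))
        (sq_nonneg α)) (sub_nonneg.mpr hα1)
    linarith [h0]
  have S4 : 6 * lam2 * lamN * α ^ 3 * r * q
      ≤ α * lam2 ^ 2 * q ^ 2 + 9 * α ^ 5 * lamN ^ 2 * r ^ 2 := by
    nlinarith [mul_nonneg hα0.le (sq_nonneg (lam2 * q - 3 * lamN * α ^ 2 * r)),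
      pow_pos hα0 5, pow_pos hα0 4, sq_nonneg (α ^ 2 - 1), mul_nonneg hr hq,
      mul_nonneg (mul_nonneg h3.le hlamN.le) (mul_nonneg hr hq),
      mul_nonneg (mul_nonneg (pow_pos hα0 2).le (sub_nonneg.mpr (one_le_pow₀ hα1 (n := 2))))
        (mul_nonneg (mul_nonneg h3.le hlamN.le) (mul_nonneg hr hq))]
  have S5 : 2 * lam2 * (2 * hu * α ^ 2 * q * p)
      ≤ α * lam2 ^ 2 * q ^ 2 + 4 * hu ^ 2 * α ^ 3 * p ^ 2 := by
    nlinarith [mul_nonneg hα0.le (sq_nonneg (lam2 * q - 2 * hu * α * p))]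
  have S6 : 3 * (4 * hu ^ 2 * α ^ 3 * p ^ 2) ≤ 2 * (lam2 * (α ^ 4 * hl * p ^ 2)) := by
    nlinarith [mul_nonneg (pow_pos hα0 3).le (sq_nonneg p)]
  have S7 : 2 * lam2 * (α * lamN * r ^ 2 * α ^ 3) + 9 * α ^ 5 * lamN ^ 2 * r ^ 2
      ≤ 2 * lam2 * (β * lam2 * r ^ 2 * α ^ 3) := by
    have h1' : 14 * α ^ 5 * lamN ^ 2 * r ^ 2 ≤ 2 * β * lam2 ^ 2 * α ^ 3 * r ^ 2 := by
      nlinarith [mul_nonneg (pow_pos hα0 3).le (sq_nonneg r)]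
    have h2' : 2 * lam2 * α ^ 4 * lamN * r ^ 2 ≤ 2 * α ^ 5 * lamN ^ 2 * r ^ 2 := by
      nlinarith [mul_nonneg (mul_nonneg (pow_pos hα0 4).le hlamN.le) (sq_nonneg r),
        mul_nonneg (mul_nonneg (mul_nonneg (pow_pos hα0 4).le hlamN.le) (sq_nonneg r))
          (sub_nonneg.mpr hα1), sub_nonneg.mpr h4]
    have h3' : (0:ℝ) ≤ α ^ 5 * lamN ^ 2 * r ^ 2 := by positivity
    linarith [h1', h2', h3']
  have hhl : 0 ≤ lam2 * (α ^ 4 * hl * p ^ 2) := by positivity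
  have key : 2 * lam2 * ((-α * hl * p ^ 2 - β * lam2 * r ^ 2 + α * lamN * r ^ 2
        + lamN * r * q) * α ^ 3 - 2 * lam2 * α * q ^ 2 + 2 * lamN * α ^ 2 * r * q
        + 2 * hu * α ^ 2 * q * p)
      ≤ 2 * lam2 * ((-(eta * p ^ 2) * α ^ 3 - 2 * eta * q ^ 2)) := by
    nlinarith [S1, S2, S3, S4, S5, S6, S7, hhl]
  have h := (mul_le_mul_iff_right₀ (show (0:ℝ) < 2 * lam2 by linarith)).mp key
  exact mul_le_mul_of_nonneg_right h hα3.le
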